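/- Let p be an odd prime. The inclusion i : C_p ↪ D_{2p} of the cyclic group of order p into the dihedral group of order 2p is an envelope: every homomorphism C_p → D_{2p} extends along i to an endomorphism of D_{2p}, and every endomorphism f of D_{2p} with f∘i = i is an automorphism. Moreover the Galois group Gal(i) = {f ∈ Aut(D_{2p}) : f∘i = i} is isomorphic to C_p. -/

import Mathlib

/-- The embedding of the cyclic group of order n (multiplicatively written) as the
rotation subgroup of the dihedral group of order 2n. -/
def rotHom (n : ℕ) : Multiplicative (ZMod n) →* DihedralGroup n where
  toFun x := DihedralGroup.r x.toAdd
  map_one' := rfl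
  map_mul' _ _ := rfl

/-- The Galois group of a homomorphism φ : H → G, i.e. the subgroup
{f ∈ Aut(G) : f∘φ = φ} of Aut(G). -/
def galGroup {H G : Type} [Group H] [Group G] (φ : H →* G) : Subgroup (MulAut G) where
  carrier := {f | ∀ h, f (φ h) = φ h}
  one_mem' _ := rfl
  mul_mem' {a b} ha hb h := by rw [MulAut.mul_apply, hb h, ha h]
  inv_mem' {a} ha h := by
    conv_lhs => rw [← ha h]
    exact a.symm_apply_apply _

open DihedralGroup in
/-- The endomorphism of D_{2n} sending r i ↦ r (a*i) and sr i ↦ sr (a*i + b). -/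
def dmap (n : ℕ) (a b : ZMod n) : DihedralGroup n →* DihedralGroup n where
  toFun x := match x with
    | .r i => .r (a * i)
    | .sr i => .sr (a * i + b)
  map_one' := by
    show DihedralGroup.r (a * 0) = 1
    rw [mul_zero, one_def]
  map_mul' x y := by
    rcases x with i | i <;> rcases y with j | j <;>
      simp only [r_mul_r, r_mul_sr, sr_mul_r, sr_mul_sr] <;>
      · show _ = _
        congr 1
        ring

lemma dmap_r (n : ℕ) (a b i : ZMod n) :
    dmap n a b (DihedralGroup.r i) = DihedralGroup.r (a * i) := rfl

lemma dmap_sr (n : ℕ) (a b i : ZMod n) :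
    dmap n a b (DihedralGroup.sr i) = DihedralGroup.sr (a * i + b) := rfl

lemma r_pow (n : ℕ) (a : ZMod n) (k : ℕ) :
    (DihedralGroup.r a : DihedralGroup n) ^ k = DihedralGroup.r ((k : ZMod n) * a) := by
  induction k with
  | zero => rw [pow_zero, Nat.cast_zero, zero_mul, DihedralGroup.one_def]
  | succ k ih =>
    rw [pow_succ, ih, DihedralGroup.r_mul_r, Nat.cast_succ]
    congr 1
    ring

lemma two_ne_zero_zmod (p : ℕ) (hp : p.Prime) (hodd : Odd p) : (2 : ZMod p) ≠ 0 := by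
  intro h
  have h2 : ((2 : ℕ) : ZMod p) = 0 := by exact_mod_cast h
  have hdvd : p ∣ 2 := (ZMod.natCast_eq_zero_iff _ _).mp h2
  have : p = 2 := (Nat.prime_dvd_prime_iff_eq hp Nat.prime_two).mp hdvd
  rw [this] at hodd
  exact (Nat.not_odd_iff_even.mpr (by norm_num)) hodd

/-- Any endomorphism of D_{2p} fixing the rotations is of the form dmap 1 b, p odd prime. -/
lemma fix_form (p : ℕ) (hp : p.Prime) (hodd : Odd p)
    (f : DihedralGroup p →* DihedralGroup p)
    (hf : ∀ i : ZMod p, f (DihedralGroup.r i) = DihedralGroup.r i) :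
    ∃ b : ZMod p, ∀ x, f x = dmap p 1 b x := by
  have key : ∀ i : ZMod p,
      f (DihedralGroup.sr 0) * DihedralGroup.r i * f (DihedralGroup.sr 0)
        = DihedralGroup.r (-i) := by
    intro i
    have h1 : (DihedralGroup.sr 0 : DihedralGroup p) * DihedralGroup.r i * DihedralGroup.sr 0
        = DihedralGroup.r (-i) := by
      rw [DihedralGroup.sr_mul_r, DihedralGroup.sr_mul_sr, zero_add, zero_sub]
    calc f (DihedralGroup.sr 0) * DihedralGroup.r i * f (DihedralGroup.sr 0)
        = f (DihedralGroup.sr 0 * DihedralGroup.r i * DihedralGroup.sr 0) := by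
          rw [map_mul, map_mul, hf]
      _ = DihedralGroup.r (-i) := by rw [h1, hf]
  cases h0 : f (DihedralGroup.sr 0) with
  | r c =>
    exfalso
    have k0 := key 0
    have k1 := key 1
    rw [h0] at k0 k1
    rw [DihedralGroup.r_mul_r, DihedralGroup.r_mul_r] at k0 k1
    have e0 : c + 0 + c = -(0 : ZMod p) := DihedralGroup.r.inj k0
    have e1 : c + 1 + c = (-1 : ZMod p) := DihedralGroup.r.inj k1
    have : (2 : ZMod p) = 0 := by linear_combination e1 - e0
    exact two_ne_zero_zmod p hp hodd this
  | sr b =>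
    refine ⟨b, fun x => ?_⟩
    cases x with
    | r i => rw [hf i, dmap_r, one_mul]
    | sr i =>
      have hx : (DihedralGroup.sr i : DihedralGroup p)
          = DihedralGroup.sr 0 * DihedralGroup.r i := by
        rw [DihedralGroup.sr_mul_r, zero_add]
      conv_lhs => rw [hx]
      rw [map_mul, h0, hf, DihedralGroup.sr_mul_r, dmap_sr, one_mul, add_comm]

/-- dmap 1 b as an automorphism. -/
def galE (p : ℕ) (b : ZMod p) : MulAut (DihedralGroup p) where
  toFun := dmap p 1 b
  invFun := dmap p 1 (-b)
  left_inv x := by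
    cases x with
    | r i => rw [dmap_r, dmap_r, one_mul, one_mul]
    | sr i => rw [dmap_sr, dmap_sr]; congr 1; ring
  right_inv x := by
    cases x with
    | r i => rw [dmap_r, dmap_r, one_mul, one_mul]
    | sr i => rw [dmap_sr, dmap_sr]; congr 1; ring
  map_mul' := (dmap p 1 b).map_mul

/-- for an odd prime p, the inclusion C_p ↪ D_{2p} is an envelope:
every homomorphism C_p → D_{2p} extends to an endomorphism of D_{2p}, every
endomorphism of D_{2p} restricting to the inclusion is an automorphism, and the
Galois group is isomorphic to C_p. -/
theorem cyclic_in_dihedral_is_envelope (p : ℕ) (hp : p.Prime) (hodd : Odd p) :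
    Function.Surjective
      (fun f : DihedralGroup p →* DihedralGroup p => f.comp (rotHom p)) ∧
    (∀ f : DihedralGroup p →* DihedralGroup p,
      f.comp (rotHom p) = rotHom p → Function.Bijective f) ∧
    Nonempty (↥(galGroup (rotHom p)) ≃* Multiplicative (ZMod p)) := by
  haveI : NeZero p := ⟨hp.ne_zero⟩
  refine ⟨?_, ?_, ?_⟩
  · -- surjectivity of restriction
    intro f
    have hgen : ∀ x : Multiplicative (ZMod p),
        x = (Multiplicative.ofAdd (1 : ZMod p)) ^ (Multiplicative.toAdd x).val := by
      intro x
      rw [← ofAdd_nsmul, nsmul_eq_mul, mul_one, ZMod.natCast_zmod_val, ofAdd_toAdd]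
    cases hg : f (Multiplicative.ofAdd (1 : ZMod p)) with
    | sr c =>
      exfalso
      have hpow : f (Multiplicative.ofAdd (1 : ZMod p)) ^ p = 1 := by
        rw [← map_pow, ← ofAdd_nsmul, nsmul_eq_mul, mul_one, ZMod.natCast_self, ofAdd_zero,
          map_one]
      rw [hg] at hpow
      obtain ⟨k, hk⟩ := hodd
      have hsq : (DihedralGroup.sr c : DihedralGroup p) ^ 2 = 1 := by
        rw [pow_two, DihedralGroup.sr_mul_sr, sub_self, ← DihedralGroup.one_def]
      have he : (DihedralGroup.sr c : DihedralGroup p) ^ p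
          = (DihedralGroup.sr c) ^ (2 * k + 1) := by rw [← hk]
      rw [he, pow_add, pow_mul, hsq, one_pow, one_mul, pow_one,
        DihedralGroup.one_def] at hpow
      exact absurd hpow (by intro h; cases h)
    | r a =>
      refine ⟨dmap p a 0, MonoidHom.ext fun x => ?_⟩
      show dmap p a 0 (DihedralGroup.r (Multiplicative.toAdd x)) = f x
      rw [dmap_r]
      conv_rhs => rw [hgen x]
      rw [map_pow, hg, r_pow, ZMod.natCast_zmod_val, mul_comm]
  · -- rigidity
    intro f hf
    have hf' : ∀ i : ZMod p, f (DihedralGroup.r i) = DihedralGroup.r i := fun i =>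
      DFunLike.congr_fun hf (Multiplicative.ofAdd i)
    obtain ⟨b, hb⟩ := fix_form p hp hodd f hf'
    have hfe : ⇑f = ⇑(galE p b) := funext fun x => hb x
    rw [hfe]
    exact (galE p b).bijective
  · -- Galois group
    have hmem : ∀ b : ZMod p, galE p b ∈ galGroup (rotHom p) := by
      intro b h
      show dmap p 1 b (DihedralGroup.r (Multiplicative.toAdd h)) = _
      rw [dmap_r, one_mul]; rfl
    let Φ : Multiplicative (ZMod p) →* ↥(galGroup (rotHom p)) :=
      { toFun := fun x => ⟨galE p (Multiplicative.toAdd x), hmem _⟩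
        map_one' := by
          refine Subtype.ext (MulEquiv.ext fun z => ?_)
          show dmap p 1 (Multiplicative.toAdd (1 : Multiplicative (ZMod p))) z = z
          cases z with
          | r i => rw [dmap_r, one_mul]
          | sr i => rw [dmap_sr, toAdd_one, one_mul, add_zero]
        map_mul' := by
          intro x y
          refine Subtype.ext (MulEquiv.ext fun z => ?_)
          show dmap p 1 (Multiplicative.toAdd (x * y)) z
            = dmap p 1 (Multiplicative.toAdd x) (dmap p 1 (Multiplicative.toAdd y) z)
          cases z with
          | r i =>
            rw [dmap_r, dmap_r, dmap_r]
            congr 1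
            ring
          | sr i =>
            rw [dmap_sr, dmap_sr, dmap_sr, toAdd_mul]
            congr 1
            ring }
    have hinj : Function.Injective Φ := by
      intro x y h
      have := congrArg (fun F : ↥(galGroup (rotHom p)) => (F : MulAut (DihedralGroup p))
        (DihedralGroup.sr 0)) h
      simp only [Φ] at this
      have h2 : DihedralGroup.sr (1 * 0 + Multiplicative.toAdd x)
          = DihedralGroup.sr (1 * 0 + Multiplicative.toAdd y) := this
      have h3 : Multiplicative.toAdd x = Multiplicative.toAdd y := by
        have := DihedralGroup.sr.inj h2
        simpa using this
      exact Multiplicative.toAdd.injective h3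
    have hsurj : Function.Surjective Φ := by
      rintro ⟨f, hfmem⟩
      have hf' : ∀ i : ZMod p, f (DihedralGroup.r i) = DihedralGroup.r i := fun i =>
        hfmem (Multiplicative.ofAdd i)
      obtain ⟨b, hb⟩ := fix_form p hp hodd f.toMonoidHom hf'
      refine ⟨Multiplicative.ofAdd b, Subtype.ext (MulEquiv.ext fun z => ?_)⟩
      show dmap p 1 (Multiplicative.toAdd (Multiplicative.ofAdd b)) z = f z
      rw [toAdd_ofAdd, ← hb]
      rfl
    exact ⟨(MulEquiv.ofBijective Φ ⟨hinj, hsurj⟩).symm⟩
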